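/- If the coefficients of the nonautonomous Hirota–Miwa equation satisfy α_h α_{h+w} β_{h+v₁} β_{h+u₁} = β_h β_{h+w} α_{h+v₂} α_{h+u₂} for all h ∈ ℤ³, then there exists a nowhere-vanishing gauge function φ : ℤ³ → k^× transforming the equation into the autonomous equation with any prescribed nonzero constant coefficients α̃, β̃; i.e. φ_h φ_{h+w}/(φ_{h+v₁} φ_{h+u₁}) = α̃/α_h and φ_h φ_{h+w}/(φ_{h+v₂} φ_{h+u₂}) = β̃/β_h for all h. -/

import Mathlib

set_option linter.unusedSectionVars false

namespace HMGauge
variable {M : Type*} [AddCommGroup M]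

def zsum (F : ℤ → M) (n : ℤ) : M :=
  (∑ x ∈ Finset.range n.toNat, F x) - ∑ x ∈ Finset.range (-n).toNat, F (-(x : ℤ) - 1)

lemma zsum_succ (F : ℤ → M) (n : ℤ) : zsum F (n + 1) = zsum F n + F n := by
  unfold zsum
  rcases le_or_gt 0 n with hn | hn
  · rw [show (-(n+1)).toNat = 0 by omega, show (-n).toNat = 0 by omega,
      show (n+1).toNat = n.toNat + 1 by omega, Finset.sum_range_succ,
      show ((n.toNat : ℤ)) = n by omega]
    simp
  · rw [show (n+1).toNat = 0 by omega, show n.toNat = 0 by omega,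
      show (-n).toNat = (-(n+1)).toNat + 1 by omega, Finset.sum_range_succ,
      show (-(((-(n+1)).toNat : ℤ)) - 1) = n by omega]
    simp only [Finset.range_zero, Finset.sum_empty]
    abel

variable (A B : ℤ → ℤ → ℤ → M)

def Wf (i d t : ℤ) : M := zsum (fun n => A i (d + n) n) t

lemma Wf_succ (i d t : ℤ) : Wf A i d (t + 1) = Wf A i d t + A i (d + t) t :=
  zsum_succ _ t

def L0 (i j t : ℤ) : M := zsum (fun m => Wf A m (j - t) t) i

lemma L0_spec (i j t : ℤ) :
    L0 A (i+1) j t + L0 A i (j+1) (t+1) + A i j t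
      = L0 A i j t + L0 A (i+1) (j+1) (t+1) := by
  have h1 : L0 A (i+1) j t = L0 A i j t + Wf A i (j-t) t := zsum_succ _ i
  have h2 : L0 A (i+1) (j+1) (t+1) = L0 A i (j+1) (t+1) + Wf A i (j-t) (t+1) := by
    simp only [L0]
    rw [show j+1-(t+1) = j-t by ring]
    exact zsum_succ _ i
  rw [h1, h2, Wf_succ, show j-t+t = j by ring]
  abel

def Cc (i j t : ℤ) : M :=
  B i j t + (L0 A i (j+1) t + L0 A (i+1) j (t+1)) - (L0 A i j t + L0 A (i+1) (j+1) (t+1))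

lemma Cc_spec (hC : ∀ i j t, A i j t + A (i+1) (j+1) (t+1) + B (i+1) j t + B i (j+1) (t+1)
      = B i j t + B (i+1) (j+1) (t+1) + A i (j+1) t + A (i+1) j (t+1)) (i j t : ℤ) :
    Cc A B (i+1) j t + Cc A B i (j+1) (t+1)
      = Cc A B i j t + Cc A B (i+1) (j+1) (t+1) := by
  have h := hC i j t
  have b1 : A i j t = L0 A i j t + L0 A (i+1) (j+1) (t+1)
      - (L0 A (i+1) j t + L0 A i (j+1) (t+1)) := by
    rw [← L0_spec A i j t]; abel
  have b2 : A (i+1) (j+1) (t+1) = L0 A (i+1) (j+1) (t+1) + L0 A (i+1+1) (j+1+1) (t+1+1)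
      - (L0 A (i+1+1) (j+1) (t+1) + L0 A (i+1) (j+1+1) (t+1+1)) := by
    rw [← L0_spec A (i+1) (j+1) (t+1)]; abel
  have b3 : A i (j+1) t = L0 A i (j+1) t + L0 A (i+1) (j+1+1) (t+1)
      - (L0 A (i+1) (j+1) t + L0 A i (j+1+1) (t+1)) := by
    rw [← L0_spec A i (j+1) t]; abel
  have b4 : A (i+1) j (t+1) = L0 A (i+1) j (t+1) + L0 A (i+1+1) (j+1) (t+1+1)
      - (L0 A (i+1+1) j (t+1) + L0 A (i+1) (j+1) (t+1+1)) := by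
    rw [← L0_spec A (i+1) j (t+1)]; abel
  rw [b1, b2, b3, b4] at h
  simp only [Cc]
  rw [← sub_eq_zero] at h ⊢
  rw [← h]
  abel

def gfun (j t : ℤ) : M := Cc A B 0 (j+1) (t+1) - Cc A B 0 j t

lemma Cc_diag (hC : ∀ i j t, A i j t + A (i+1) (j+1) (t+1) + B (i+1) j t + B i (j+1) (t+1)
      = B i j t + B (i+1) (j+1) (t+1) + A i (j+1) t + A (i+1) j (t+1)) (i j t : ℤ) :
    Cc A B i (j+1) (t+1) - Cc A B i j t = gfun A B j t := by
  induction i using Int.induction_on with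
  | zero => rfl
  | succ n ih =>
    have h := (Cc_spec A B hC n j t).symm
    rw [← ih]
    rw [← sub_eq_zero] at h ⊢
    rw [← h]
    abel
  | pred n ih =>
    have h := Cc_spec A B hC (-(n:ℤ)-1) j t
    rw [show (-(n:ℤ)-1)+1 = -(n:ℤ) by ring] at h
    rw [← ih]
    rw [← sub_eq_zero] at h ⊢
    rw [← h]
    abel

lemma diag_const (F : ℤ → ℤ → M) (hF : ∀ j t, F (j+1) (t+1) = F j t) (j t : ℤ) :
    F j t = F (j - t) 0 := by
  suffices h : ∀ (t d : ℤ), F (d + t) t = F d 0 by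
    have h2 := h t (j - t)
    rw [show j - t + t = j by ring] at h2
    exact h2
  intro t
  induction t using Int.induction_on with
  | zero => intro d; rw [add_zero]
  | succ n ih =>
    intro d
    have h1 := hF (d + n) n
    rw [show d + ((n:ℤ)+1) = (d + n) + 1 by ring, h1]
    exact ih _
  | pred n ih =>
    intro d
    have h1 := hF (d + (-(n:ℤ) - 1)) (-(n:ℤ) - 1)
    rw [show d + (-(n:ℤ)-1) + 1 = d + -(n:ℤ) by ring,
      show (-(n:ℤ)-1) + 1 = -(n:ℤ) by ring] at h1
    rw [← h1]
    exact ih _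

def Gg (j t : ℤ) : M := zsum (fun n => gfun A B (j - t + n) n) t

lemma Gg_succ (j t : ℤ) :
    Gg A B (j+1) (t+1) = Gg A B j t + gfun A B j t := by
  simp only [Gg]
  rw [show j+1-(t+1) = j - t by ring, zsum_succ, show j - t + t = j by ring]

def h2f (i u : ℤ) : M := Cc A B i u 0 - Gg A B u 0

lemma Cc_decomp (hC : ∀ i j t, A i j t + A (i+1) (j+1) (t+1) + B (i+1) j t + B i (j+1) (t+1)
      = B i j t + B (i+1) (j+1) (t+1) + A i (j+1) t + A (i+1) j (t+1)) (i j t : ℤ) :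
    Cc A B i j t = h2f A B i (j - t) + Gg A B j t := by
  have hF : ∀ j t, (fun j t => Cc A B i j t - Gg A B j t) (j+1) (t+1)
      = (fun j t => Cc A B i j t - Gg A B j t) j t := by
    intro j t
    simp only
    rw [Gg_succ]
    have hd := Cc_diag A B hC i j t
    rw [← hd]
    abel
  have h := diag_const (fun j t => Cc A B i j t - Gg A B j t) hF j t
  simp only [h2f]
  rw [← h]
  abel

def Qd (j t : ℤ) : M := zsum (fun m => zsum (fun n => Gg A B m n) t) j

lemma Qd_spec (j t : ℤ) :
    Qd A B j t + Qd A B (j+1) (t+1)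
      = Qd A B (j+1) t + Qd A B j (t+1) + Gg A B j t := by
  have h1 : Qd A B (j+1) (t+1) = Qd A B j (t+1) + zsum (fun n => Gg A B j n) (t+1) :=
    zsum_succ _ j
  have h2 : Qd A B (j+1) t = Qd A B j t + zsum (fun n => Gg A B j n) t :=
    zsum_succ _ j
  have h3 : zsum (fun n => Gg A B j n) (t+1) = zsum (fun n => Gg A B j n) t + Gg A B j t :=
    zsum_succ _ t
  rw [h1, h2, h3]
  abel

def Pd (i v : ℤ) : M := zsum (fun m => zsum (fun n => h2f A B m (n - m)) v) i

lemma Pd_spec (i v : ℤ) :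
    Pd A B i v + Pd A B (i+1) (v+1)
      = Pd A B (i+1) v + Pd A B i (v+1) + h2f A B i (v - i) := by
  have h1 : Pd A B (i+1) (v+1) = Pd A B i (v+1) + zsum (fun n => h2f A B i (n - i)) (v+1) :=
    zsum_succ _ i
  have h2 : Pd A B (i+1) v = Pd A B i v + zsum (fun n => h2f A B i (n - i)) v :=
    zsum_succ _ i
  have h3 : zsum (fun n => h2f A B i (n - i)) (v+1)
      = zsum (fun n => h2f A B i (n - i)) v + h2f A B i (v - i) :=
    zsum_succ _ v
  rw [h1, h2, h3]
  abel

def LL (i j t : ℤ) : M := L0 A i j t + Qd A B j t + Pd A B i (j - t + i)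

lemma LL_E1 (i j t : ℤ) :
    LL A B (i+1) j t + LL A B i (j+1) (t+1) + A i j t
      = LL A B i j t + LL A B (i+1) (j+1) (t+1) := by
  simp only [LL]
  rw [show j - t + (i+1) = (j - t + i) + 1 by ring,
    show j + 1 - (t+1) + i = j - t + i by ring,
    show j + 1 - (t+1) + (i+1) = (j - t + i) + 1 by ring]
  have h := L0_spec A i j t
  rw [← sub_eq_zero] at h ⊢
  rw [← h]
  abel

lemma LL_E2 (hC : ∀ i j t, A i j t + A (i+1) (j+1) (t+1) + B (i+1) j t + B i (j+1) (t+1)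
      = B i j t + B (i+1) (j+1) (t+1) + A i (j+1) t + A (i+1) j (t+1)) (i j t : ℤ) :
    LL A B i (j+1) t + LL A B (i+1) j (t+1) + B i j t
      = LL A B i j t + LL A B (i+1) (j+1) (t+1) := by
  simp only [LL]
  rw [show j + 1 - t + i = (j - t + i) + 1 by ring,
    show j - (t+1) + (i+1) = j - t + i by ring,
    show j + 1 - (t+1) + (i+1) = (j - t + i) + 1 by ring]
  have hc := Cc_decomp A B hC i j t
  simp only [Cc] at hc
  have hq := (Qd_spec A B j t).symm
  have hp := (Pd_spec A B i (j - t + i)).symm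
  rw [show j - t + i - i = j - t by ring] at hp
  have h := congrArg₂ (· + ·) (congrArg₂ (· + ·) hc hq) hp
  rw [← sub_eq_zero] at h ⊢
  rw [← h]
  abel

theorem exists_potential (hC : ∀ i j t, A i j t + A (i+1) (j+1) (t+1) + B (i+1) j t + B i (j+1) (t+1)
      = B i j t + B (i+1) (j+1) (t+1) + A i (j+1) t + A (i+1) j (t+1)) :
    ∃ L : ℤ → ℤ → ℤ → M,
      (∀ i j t, L (i+1) j t + L i (j+1) (t+1) + A i j t
          = L i j t + L (i+1) (j+1) (t+1)) ∧
      (∀ i j t, L i (j+1) t + L (i+1) j (t+1) + B i j t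
          = L i j t + L (i+1) (j+1) (t+1)) :=
  ⟨LL A B, fun i j t => LL_E1 A B i j t, fun i j t => LL_E2 A B hC i j t⟩

end HMGauge

section Transfer

variable {k : Type*} [Field k]

lemma units_step (a b X Y : kˣ) (h : X * (b / a) = Y) : a * Y = b * X := by
  rw [← h, ← Units.val_inj]
  push_cast
  field_simp

lemma units_cond (a1 a2 a3 a4 b1 b2 b3 b4 c d : kˣ)
    (h : a1 * a2 * b1 * b2 = b3 * b4 * a3 * a4) :
    Additive.ofMul (c / a1) + Additive.ofMul (c / a2) + Additive.ofMul (d / b1)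
      + Additive.ofMul (d / b2)
    = Additive.ofMul (d / b3) + Additive.ofMul (d / b4) + Additive.ofMul (c / a3)
      + Additive.ofMul (c / a4) := by
  apply Additive.toMul.injective
  simp only [toMul_add, toMul_ofMul]
  rw [← Units.val_inj]
  have hk := congrArg Units.val h
  push_cast at hk ⊢
  field_simp
  linear_combination (-1 : k) * hk

end Transfer

/-- If the coefficients of the nonautonomous Hirota–Miwa equation
satisfy `α h * α (h+w) * β (h+v₁) * β (h+u₁) = β h * β (h+w) * α (h+v₂) * α (h+u₂)`
for all `h ∈ ℤ³`, then for any prescribed nonzero constants `α̃, β̃` there is a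
nowhere-vanishing gauge `φ : ℤ³ → kˣ` with
`φ h * φ (h+w) / (φ (h+v₁) * φ (h+u₁)) = α̃ / α h` and
`φ h * φ (h+w) / (φ (h+v₂) * φ (h+u₂)) = β̃ / β h` for all `h`. -/
theorem gauge_to_autonomous_hirota_miwa
    (k : Type*) [Field k]
    (v₁ u₁ v₂ u₂ w : ℤ × ℤ × ℤ)
    (hv₁ : v₁ = (-1, 0, 0)) (hu₁ : u₁ = (0, 1, -1))
    (hv₂ : v₂ = (0, 0, -1)) (hu₂ : u₂ = (-1, 1, 0))
    (hw : w = (-1, 1, -1))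
    (α β : ℤ × ℤ × ℤ → kˣ)
    (hcond : ∀ h, α h * α (h + w) * β (h + v₁) * β (h + u₁)
      = β h * β (h + w) * α (h + v₂) * α (h + u₂))
    (α' β' : kˣ) :
    ∃ φ : ℤ × ℤ × ℤ → kˣ,
      (∀ h, α h * (φ h * φ (h + w)) = α' * (φ (h + v₁) * φ (h + u₁))) ∧
      (∀ h, β h * (φ h * φ (h + w)) = β' * (φ (h + v₂) * φ (h + u₂))) := by
  subst hv₁ hu₁ hv₂ hu₂ hw
  obtain ⟨L, hE1, hE2⟩ := HMGauge.exists_potential (M := Additive kˣ)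
    (fun i j t => Additive.ofMul (α' / α (-i, t, -j)))
    (fun i j t => Additive.ofMul (β' / β (-i, t, -j)))
    (by
      intro i j t
      have h0 := hcond (-i, t, -j)
      rw [show ((-i, t, -j) : ℤ × ℤ × ℤ) + (-1, 1, -1) = (-(i+1), t+1, -(j+1)) by
            simp [Prod.ext_iff]; omega,
          show ((-i, t, -j) : ℤ × ℤ × ℤ) + (-1, 0, 0) = (-(i+1), t, -j) by
            simp [Prod.ext_iff]; omega,
          show ((-i, t, -j) : ℤ × ℤ × ℤ) + (0, 1, -1) = (-i, t+1, -(j+1)) by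
            simp [Prod.ext_iff]; omega,
          show ((-i, t, -j) : ℤ × ℤ × ℤ) + (0, 0, -1) = (-i, t, -(j+1)) by
            simp [Prod.ext_iff]; omega,
          show ((-i, t, -j) : ℤ × ℤ × ℤ) + (-1, 1, 0) = (-(i+1), t+1, -j) by
            simp [Prod.ext_iff]; omega] at h0
      exact units_cond _ _ _ _ _ _ _ _ _ _ h0)
  refine ⟨fun p => Additive.toMul (L (-p.1) (-p.2.2) p.2.1), ?_, ?_⟩
  · rintro ⟨x, y, z⟩
    have e := congrArg Additive.toMul (hE1 (-x) (-z) y)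
    simp only [toMul_add, toMul_ofMul, neg_neg] at e
    simp only [Prod.mk_add_mk, add_zero]
    rw [show (-(x + -1) : ℤ) = -x + 1 by ring, show (-(z + -1) : ℤ) = -z + 1 by ring]
    exact units_step _ _ _ _ e
  · rintro ⟨x, y, z⟩
    have e := congrArg Additive.toMul (hE2 (-x) (-z) y)
    simp only [toMul_add, toMul_ofMul, neg_neg] at e
    simp only [Prod.mk_add_mk, add_zero]
    rw [show (-(x + -1) : ℤ) = -x + 1 by ring, show (-(z + -1) : ℤ) = -z + 1 by ring]
    exact units_step _ _ _ _ e
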